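/- (Bi-free Stam inequality, Hilbert-space form.) Let H be a real or complex Hilbert space and h₁, h₂, h₃, f₁, f₂ ∈ H satisfy h₁ = h₃ + f₁, h₂ = h₃ + f₂, h₃ ⊥ f₁, h₃ ⊥ f₂, and h₁ ⊥ h₂. Then ‖h₃‖² (‖h₁‖² + ‖h₂‖²) ≤ ‖h₁‖²‖h₂‖², and hence if ‖h₁‖, ‖h₂‖, ‖h₃‖ are all nonzero, (‖h₃‖²)^{−1} ≥ (‖h₁‖²)^{−1} + (‖h₂‖²)^{−1}. -/

import Mathlib

/-- Bi-free Stam inequality, Hilbert-space form.  If `h₁ = h₃ + f₁`,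
`h₂ = h₃ + f₂` with `h₃ ⊥ f₁`, `h₃ ⊥ f₂`, and `h₁ ⊥ h₂`, then
`‖h₃‖²(‖h₁‖² + ‖h₂‖²) ≤ ‖h₁‖²‖h₂‖²`, and hence, when all three norms are
nonzero, `(‖h₃‖²)⁻¹ ≥ (‖h₁‖²)⁻¹ + (‖h₂‖²)⁻¹`. -/
theorem stmt8 {𝕜 H : Type*} [RCLike 𝕜] [NormedAddCommGroup H] [InnerProductSpace 𝕜 H]
    (h₁ h₂ h₃ f₁ f₂ : H)
    (e1 : h₁ = h₃ + f₁) (e2 : h₂ = h₃ + f₂)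
    (o1 : (inner 𝕜 h₃ f₁ : 𝕜) = 0) (o2 : (inner 𝕜 h₃ f₂ : 𝕜) = 0)
    (o3 : (inner 𝕜 h₁ h₂ : 𝕜) = 0) :
    ‖h₃‖^2 * (‖h₁‖^2 + ‖h₂‖^2) ≤ ‖h₁‖^2 * ‖h₂‖^2 ∧
    (‖h₁‖ ≠ 0 → ‖h₂‖ ≠ 0 → ‖h₃‖ ≠ 0 →
      (‖h₁‖^2)⁻¹ + (‖h₂‖^2)⁻¹ ≤ (‖h₃‖^2)⁻¹) := by
  have o1' : (inner 𝕜 f₁ h₃ : 𝕜) = 0 := by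
    rw [← inner_conj_symm, o1, map_zero]
  have key : (inner 𝕜 f₁ f₂ : 𝕜) = - ((‖h₃‖:𝕜)^2) := by
    have h := o3
    rw [e1, e2, inner_add_left, inner_add_right, inner_add_right, o1', o2,
      inner_self_eq_norm_sq_to_K] at h
    linear_combination h
  have hcs : ‖h₃‖^2 ≤ ‖f₁‖ * ‖f₂‖ := by
    have := norm_inner_le_norm (𝕜 := 𝕜) f₁ f₂
    rw [key] at this
    simpa using this
  have p1 : ‖h₁‖^2 = ‖h₃‖^2 + ‖f₁‖^2 := by
    rw [e1, @norm_add_sq 𝕜]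
    simp [o1]
  have p2 : ‖h₂‖^2 = ‖h₃‖^2 + ‖f₂‖^2 := by
    have o2' : (inner 𝕜 f₂ h₃ : 𝕜) = 0 := by
      rw [← inner_conj_symm, o2, map_zero]
    rw [e2, @norm_add_sq 𝕜]
    simp [o2]
  have main : ‖h₃‖^2 * (‖h₁‖^2 + ‖h₂‖^2) ≤ ‖h₁‖^2 * ‖h₂‖^2 := by
    nlinarith [sq_nonneg (‖f₁‖ - ‖f₂‖), sq_nonneg (‖f₁‖*‖f₂‖ - ‖h₃‖^2),
      norm_nonneg f₁, norm_nonneg f₂, norm_nonneg h₃, sq_nonneg (‖h₃‖^2)]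
  refine ⟨main, fun n1 n2 n3 => ?_⟩
  have q1 : (0:ℝ) < ‖h₁‖^2 := by positivity
  have q2 : (0:ℝ) < ‖h₂‖^2 := by positivity
  have q3 : (0:ℝ) < ‖h₃‖^2 := by positivity
  rw [inv_add_inv (ne_of_gt q1) (ne_of_gt q2), div_le_iff₀ (by positivity),
    inv_mul_eq_div, le_div_iff₀ q3]
  nlinarith [main]
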